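/- Let N ≥ 2, let L be a real N×N matrix, β ∈ ℝ, x : [0,∞) → ℝ^N differentiable, m ∈ ℝ^N with 1ᵀm = 0, and x̂ : [0,∞) → ℝ^N differentiable with x̂'(t) = x'(t) − β·L·x̂(t) for all t ≥ 0 and x̂(0) = x(0) + m. Then for every index i, every index j ≠ i, and every r ∈ ℝ, there exist a differentiable x̃ : [0,∞) → ℝ^N and m̃ ∈ ℝ^N with 1ᵀm̃ = 0 such that: x̃_i(t) = x_i(t) + r for all t ≥ 0; x̃(t) + m̃ = x(t) + m for all t ≥ 0; 1ᵀx̃(t) = 1ᵀx(t) for all t ≥ 0; and x̂ satisfies x̂'(t) = x̃'(t) − β·L·x̂(t) with x̂(0) = x̃(0) + m̃. Consequently, an external eavesdropper observing only L, β, and the trajectory x̂ cannot uniquely identify any agent's reference signal x_i(t). -/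

import Mathlib

open Matrix

/-- Theorem 2: privacy against external eavesdroppers. For every agent
`i`, every other agent `j ≠ i` and every shift `r ∈ ℝ`, there is an alternative
execution `(x̃, m̃)` with zero-sum mask whose `i`-th reference differs from `x_i` by
`r`, yet which produces exactly the same masked references, the same average, and is
compatible with the same observed estimate trajectory `xhat`; hence the eavesdropper
cannot uniquely identify `x_i(t)`. -/
theorem eavesdropper_cannot_identify_reference
    (N : ℕ) (hN : 2 ≤ N) (L : Matrix (Fin N) (Fin N) ℝ) (β : ℝ)
    (x : ℝ → Fin N → ℝ) (hx : Differentiable ℝ x)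
    (m : Fin N → ℝ) (hm : ∑ k, m k = 0)
    (xhat : ℝ → Fin N → ℝ)
    (hode : ∀ t ≥ (0 : ℝ), HasDerivAt xhat (deriv x t - β • (L *ᵥ xhat t)) t)
    (hinit : xhat 0 = x 0 + m) :
    ∀ i j : Fin N, j ≠ i → ∀ r : ℝ,
      ∃ xt : ℝ → Fin N → ℝ, ∃ mt : Fin N → ℝ,
        Differentiable ℝ xt ∧
        (∑ k, mt k = 0) ∧
        (∀ t ≥ (0 : ℝ), xt t i = x t i + r) ∧
        (∀ t ≥ (0 : ℝ), xt t + mt = x t + m) ∧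
        (∀ t ≥ (0 : ℝ), ∑ k, xt t k = ∑ k, x t k) ∧
        (∀ t ≥ (0 : ℝ), HasDerivAt xhat (deriv xt t - β • (L *ᵥ xhat t)) t) ∧
        xhat 0 = xt 0 + mt := by
  intro i j hji r
  set d : Fin N → ℝ := fun k => if k = i then r else if k = j then -r else 0 with hd
  have hdsum : ∑ k, d k = 0 := by
    have : ∑ k, d k = d i + d j := by
      rw [Finset.sum_eq_add_of_mem i j (Finset.mem_univ i) (Finset.mem_univ j)
        (fun h => (hji h.symm).elim)]
      intro k _ hk
      simp [hd, hk.1, hk.2]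
    rw [this]; simp [hd, hji]
  refine ⟨fun t => x t + d, m - d, ?_, ?_, ?_, ?_, ?_, ?_, ?_⟩
  · exact hx.add_const d
  · simp [Finset.sum_sub_distrib, hm, hdsum]
  · intro t _; simp [hd]
  · intro t _; ext k; simp
  · intro t _; simp [Finset.sum_add_distrib, hdsum]
  · intro t ht
    have : deriv (fun t => x t + d) t = deriv x t := ((hx t).hasDerivAt.add_const d).deriv
    rw [this]; exact hode t ht
  · rw [hinit]; ext k; simp
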